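/- Let d ≥ 2, let s : {1,...,d} → ℝ satisfy s_1 = 1, s strictly increasing with nonincreasing increments (convention s_0 = 0), and suppose s_{i+1}/(i+1) < λ < s_i/i for some i ∈ {1,...,d−1}. Let y* be the two-component vector with y*_i = (1/i)(λ − s_{i+1}/(i+1))/(s_i/i − s_{i+1}/(i+1)), y*_{i+1} = (1/(i+1))(s_i/i − λ)/(s_i/i − s_{i+1}/(i+1)), and zeros elsewhere. Then for every y ∈ ℝ^d with y ≥ 0, Σ_j s_j y_j = λ, and Σ_j j·y_j ≤ 1, we have Σ_j y_j ≥ y*_i + y*_{i+1}. That is, y* is an optimal solution of the linear program. -/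

import Mathlib

set_option maxHeartbeats 1000000


/-- The explicit two-component vector is an optimal solution of the LP:
every feasible y has objective at least ystar i + ystar (i+1). -/
theorem stmt_7 (d : ℕ) (hd : 2 ≤ d) (s : ℕ → ℝ) (hs0 : s 0 = 0) (hs1 : s 1 = 1)
    (hmono : ∀ j, j < d → s j < s (j + 1))
    (hconc : ∀ j, 1 ≤ j → j + 1 ≤ d → s (j + 1) - s j ≤ s j - s (j - 1))
    (lam : ℝ) (i : ℕ) (hi1 : 1 ≤ i) (hid : i + 1 ≤ d)
    (hlo : s (i + 1) / ((i : ℝ) + 1) < lam) (hhi : lam < s i / (i : ℝ))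
    (ystar : ℕ → ℝ)
    (hyi : ystar i = (1 / (i : ℝ)) * (lam - s (i + 1) / ((i : ℝ) + 1)) /
      (s i / (i : ℝ) - s (i + 1) / ((i : ℝ) + 1)))
    (hyi1 : ystar (i + 1) = (1 / ((i : ℝ) + 1)) * (s i / (i : ℝ) - lam) /
      (s i / (i : ℝ) - s (i + 1) / ((i : ℝ) + 1)))
    (hy0 : ∀ j, j ≠ i → j ≠ i + 1 → ystar j = 0) :
    ∀ y : ℕ → ℝ,
      (∀ j ∈ Finset.Icc 1 d, 0 ≤ y j) →
      (∑ j ∈ Finset.Icc 1 d, s j * y j) = lam →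
      (∑ j ∈ Finset.Icc 1 d, (j : ℝ) * y j) ≤ 1 →
      ystar i + ystar (i + 1) ≤ ∑ j ∈ Finset.Icc 1 d, y j := by
  intro y hpos hsum hlin
  have hi0 : (0:ℝ) < (i:ℝ) := by exact_mod_cast hi1
  set Δ : ℝ := s (i+1) - s i with hΔdef
  have hΔpos : 0 < Δ := by
    have := hmono i (by omega)
    simp only [hΔdef]; linarith
  -- increments are nonincreasing
  have incr_le : ∀ j k, 1 ≤ j → j ≤ k → k + 1 ≤ d →
      s (k+1) - s k ≤ s (j+1) - s j := by
    intro j k hj hjk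
    induction k with
    | zero => omega
    | succ k ih =>
      intro hkd
      rcases Nat.lt_or_ge j (k+1) with h | h
      · have h1 := hconc (k+1) (by omega) (by omega)
        simp only [Nat.add_sub_cancel] at h1
        have h2 := ih (by omega) (by omega)
        linarith
      · have : j = k+1 := by omega
        subst this; exact le_refl _
  -- supporting line: s j - Δ j ≤ s i - Δ i for all j in [1,d]
  have aux_up : ∀ m, i + m ≤ d →
      s (i+m) - Δ * (↑(i+m) : ℝ) ≤ s i - Δ * (i:ℝ) := by
    intro m
    induction m with
    | zero => intro _; simp
    | succ m ih =>
      intro hmd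
      have h1 := incr_le i (i+m) hi1 (by omega) (by omega)
      have h2 := ih (by omega)
      push_cast at h2 ⊢
      have : s (i+m+1) - s (i+m) ≤ Δ := by simp only [hΔdef] at h1 ⊢; linarith
      have e : i + (m+1) = (i + m) + 1 := by omega
      rw [e]
      push_cast
      linarith
  have aux_down : ∀ n j, 1 ≤ j → j + n = i →
      s j - Δ * (j:ℝ) ≤ s i - Δ * (i:ℝ) := by
    intro n
    induction n with
    | zero => intro j hj hji; have : j = i := by omega
              subst this; exact le_refl _
    | succ n ih =>
      intro j hj hji
      have h1 := incr_le j i hj (by omega) hid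
      have hΔle : Δ ≤ s (j+1) - s j := by simp only [hΔdef] at h1 ⊢; linarith
      have h2 := ih (j+1) (by omega) (by omega)
      push_cast at h2 ⊢
      linarith
  have claimA : ∀ j, 1 ≤ j → j ≤ d → s j - Δ * (j:ℝ) ≤ s i - Δ * (i:ℝ) := by
    intro j hj hjd
    rcases le_or_gt i j with h | h
    · have := aux_up (j - i) (by omega)
      have e : i + (j - i) = j := by omega
      rw [e] at this; exact this
    · exact aux_down (i - j) j hj (by omega)
  set E : ℝ := s i - Δ * (i:ℝ) with hEdef
  have hine : (i:ℝ) ≠ 0 := ne_of_gt hi0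
  have hi1pos : (0:ℝ) < (i:ℝ) + 1 := by linarith
  have hDpos : 0 < s i / (i:ℝ) - s (i+1) / ((i:ℝ)+1) := by linarith
  have hEpos : 0 < E := by
    have hE : E = (s i / (i:ℝ) - s (i+1) / ((i:ℝ)+1)) * (i:ℝ) * ((i:ℝ)+1) := by
      simp only [hEdef, hΔdef]
      field_simp
      ring
    rw [hE]
    positivity
  have hEne : E ≠ 0 := ne_of_gt hEpos
  -- pointwise bound
  have key : ∀ j ∈ Finset.Icc 1 d, (s j - Δ * (j:ℝ)) / E * y j ≤ y j := by
    intro j hj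
    rw [Finset.mem_Icc] at hj
    have h1 := claimA j hj.1 hj.2
    have h2 : (s j - Δ * (j:ℝ)) / E ≤ 1 := by
      rw [div_le_one hEpos]; simpa [hEdef] using h1
    have h3 := hpos j (by rw [Finset.mem_Icc]; exact hj)
    nlinarith
  have h1 : ∑ j ∈ Finset.Icc 1 d, (s j - Δ * (j:ℝ)) / E * y j
      ≤ ∑ j ∈ Finset.Icc 1 d, y j := Finset.sum_le_sum key
  have expand : ∑ j ∈ Finset.Icc 1 d, (s j - Δ * (j:ℝ)) / E * y j
      = lam / E - Δ / E * (∑ j ∈ Finset.Icc 1 d, (j:ℝ) * y j) := by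
    have hpt : ∀ j ∈ Finset.Icc 1 d, (s j - Δ * (j:ℝ)) / E * y j
        = (s j * y j) * (1/E) - Δ / E * ((j:ℝ) * y j) := by
      intro j _
      field_simp
    rw [Finset.sum_congr rfl hpt, Finset.sum_sub_distrib, ← Finset.sum_mul,
      ← Finset.mul_sum, hsum]
    ring
  set T : ℝ := ∑ j ∈ Finset.Icc 1 d, (j:ℝ) * y j with hT
  have hvΔ : 0 < Δ / E := div_pos hΔpos hEpos
  have h2 : Δ / E * T ≤ Δ / E := by nlinarith
  have hDne : s i / (i:ℝ) - s (i+1) / ((i:ℝ)+1) ≠ 0 := ne_of_gt hDpos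
  have hval : ystar i + ystar (i+1) = (lam - Δ) / E := by
    have hE : E = (s i / (i:ℝ) - s (i+1) / ((i:ℝ)+1)) * ((i:ℝ) * ((i:ℝ)+1)) := by
      simp only [hEdef, hΔdef]
      field_simp
      ring
    have hnum : (1 / (i:ℝ)) * (lam - s (i+1) / ((i:ℝ)+1))
        + (1 / ((i:ℝ)+1)) * (s i / (i:ℝ) - lam)
        = (lam - Δ) / ((i:ℝ) * ((i:ℝ)+1)) := by
      simp only [hΔdef]
      field_simp
      ring
    rw [hyi, hyi1, hE, ← add_div, hnum, div_div,
      mul_comm ((i:ℝ) * ((i:ℝ)+1))]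
  rw [hval, sub_div]
  calc lam / E - Δ / E ≤ lam / E - Δ / E * T := by linarith
    _ = ∑ j ∈ Finset.Icc 1 d, (s j - Δ * (j:ℝ)) / E * y j := by rw [expand]
    _ ≤ _ := h1
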